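/- Let G be a symmetric 2×2 integer matrix with even diagonal entries which is positive definite (G₀₀ > 0 and det G > 0), and suppose that the rational matrix 2·G⁻¹ has integer entries. Then there exists a 2×2 integer matrix P with det P = 1 or det P = −1 such that Pᵀ · G · P is the diagonal matrix diag(2, 2). -/

import Mathlib

open Matrix

lemma tr_ex (a b c d : ℤ) : (!![a,b;c,d] : Matrix (Fin 2) (Fin 2) ℤ)ᵀ = !![a,c;b,d] := by
  ext i j; fin_cases i <;> fin_cases j <;> rfl

lemma conj_fin_two (a e c t : ℤ) :
    (!![1, t; 0, 1] : Matrix (Fin 2) (Fin 2) ℤ)ᵀ * !![a, e; e, c] * !![1, t; 0, 1]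
      = !![a, e + a*t; e + a*t, c + 2*t*e + t*t*a] := by
  rw [tr_ex, Matrix.mul_fin_two, Matrix.mul_fin_two]
  ext i j; fin_cases i <;> fin_cases j <;> simp <;> ring

lemma swap_conj (a e c : ℤ) :
    (!![0,1;1,0] : Matrix (Fin 2) (Fin 2) ℤ)ᵀ * !![a, e; e, c] * !![0,1;1,0]
      = !![c, e; e, a] := by
  rw [tr_ex, Matrix.mul_fin_two, Matrix.mul_fin_two]
  ext i j; fin_cases i <;> fin_cases j <;> simp

lemma conj_comp (H H' R Q P : Matrix (Fin 2) (Fin 2) ℤ)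
    (h1 : Qᵀ * H * Q = H') (h2 : Pᵀ * H' * P = R) :
    (Q*P)ᵀ * H * (Q*P) = R := by
  have h := congrArg (fun M => Pᵀ * M * P) h1
  simp only [Matrix.mul_assoc] at h h2 ⊢
  rw [Matrix.transpose_mul]
  simp only [Matrix.mul_assoc]
  rw [h, h2]

lemma key : ∀ n : ℕ, ∀ a e c : ℤ, 0 < a → a ≤ c → c ≤ (n:ℤ) → a*c - e*e = 1 →
    ∃ P : Matrix (Fin 2) (Fin 2) ℤ, (P.det = 1 ∨ P.det = -1) ∧
      Pᵀ * !![a, e; e, c] * P = 1 := by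
  intro n
  induction n with
  | zero => intro a e c ha hac hcn _; exfalso; omega
  | succ n ih =>
    intro a e c ha hac hcn hdet
    by_cases he : 2 * |e| ≤ a
    · have habs := abs_nonneg e
      have hsq : 4 * (e * e) ≤ a * a := by
        nlinarith [abs_mul_abs_self e]
      have ha1 : a = 1 := by nlinarith
      have he0 : e = 0 := by
        rcases abs_cases e with ⟨h1, h2⟩ | ⟨h1, h2⟩ <;> omega
      have hc1 : c = 1 := by rw [ha1, he0] at hdet; linarith
      refine ⟨1, Or.inl (by simp), ?_⟩
      subst ha1 he0 hc1
      rw [Matrix.transpose_one, Matrix.one_mul, Matrix.mul_one, Matrix.one_fin_two]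
    · push_neg at he
      have ha0 : a ≠ 0 := ha.ne'
      obtain ⟨t, ht1, ht2⟩ : ∃ t : ℤ, -a ≤ 2*(e + a*t) ∧ 2*(e + a*t) ≤ a := by
        have hmod := Int.mul_ediv_add_emod e a
        have hm0 := Int.emod_nonneg e ha0
        have hma := Int.emod_lt_of_pos e ha
        rcases le_or_gt (2*(e % a)) a with h | h
        · exact ⟨-(e/a), by nlinarith, by nlinarith⟩
        · exact ⟨-(e/a) - 1, by nlinarith, by nlinarith⟩
      have hdet' : a * (c + 2*t*e + t*t*a) - (e + a*t) * (e + a*t) = 1 := by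
        linear_combination hdet
      have he'sq : 4 * ((e + a*t) * (e + a*t)) ≤ a * a := by
        nlinarith [mul_nonneg (by linarith : (0:ℤ) ≤ a - 2*(e + a*t))
          (by linarith : (0:ℤ) ≤ a + 2*(e + a*t))]
      have hc'pos : 0 < c + 2*t*e + t*t*a := by
        nlinarith [mul_self_nonneg (e + a*t)]
      have hesq : (a+1)*(a+1) ≤ 4 * (e * e) := by
        nlinarith [mul_le_mul (by linarith : a + 1 ≤ 2 * |e|) (by linarith : a + 1 ≤ 2 * |e|)
          (by linarith : (0:ℤ) ≤ a + 1) (by positivity), abs_mul_abs_self e]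
      have haltc : a < c := by
        rcases lt_or_eq_of_le hac with h | h
        · exact h
        · exfalso; subst h
          have hu := abs_nonneg e
          have huu := abs_mul_abs_self e
          rcases le_or_gt a |e| with h2 | h2
          · nlinarith [mul_le_mul h2 h2 ha.le hu]
          · nlinarith [mul_le_mul h2 h2 (by positivity : (0:ℤ) ≤ |e| + 1) ha.le]
      have hc'ltc : c + 2*t*e + t*t*a < c := by nlinarith
      set c' := c + 2*t*e + t*t*a with hc'
      set e' := e + a*t with he'
      rcases le_or_gt a c' with hle | hlt
      · obtain ⟨P, hPd, hP⟩ := ih a e' c' ha hle (by omega) hdet'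
        refine ⟨!![1,t;0,1] * P, ?_, conj_comp _ _ _ _ _ (conj_fin_two a e c t) hP⟩
        rw [Matrix.det_mul, Matrix.det_fin_two_of]
        rcases hPd with h | h <;> rw [h] <;> simp
      · obtain ⟨P, hPd, hP⟩ := ih c' e' a hc'pos hlt.le (by omega)
          (by linear_combination hdet')
        have hconj : (!![1,t;0,1] * !![0,1;1,0] : Matrix (Fin 2) (Fin 2) ℤ)ᵀ *
            !![a, e; e, c] * (!![1,t;0,1] * !![0,1;1,0]) = !![c', e'; e', a] :=
          conj_comp _ !![a, e'; e', c'] _ _ _ (conj_fin_two a e c t) (swap_conj a e' c')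
        refine ⟨!![1,t;0,1] * !![0,1;1,0] * P, ?_,
          conj_comp _ _ _ _ _ hconj hP⟩
        rw [Matrix.det_mul, Matrix.det_mul, Matrix.det_fin_two_of, Matrix.det_fin_two_of]
        rcases hPd with h | h <;> rw [h] <;> simp

lemma key2 (a e c : ℤ) (ha : 0 < a) (hc : 0 < c) (hdet : a*c - e*e = 1) :
    ∃ P : Matrix (Fin 2) (Fin 2) ℤ, (P.det = 1 ∨ P.det = -1) ∧
      Pᵀ * !![a, e; e, c] * P = 1 := by
  rcases le_total a c with h | h
  · exact key c.toNat a e c ha h (by omega) hdet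
  · obtain ⟨P, hPd, hP⟩ := key a.toNat c e a hc h (by omega) (by linear_combination hdet)
    refine ⟨!![0,1;1,0] * P, ?_, conj_comp _ _ _ _ _ (swap_conj a e c) hP⟩
    rw [Matrix.det_mul, Matrix.det_fin_two_of]
    rcases hPd with h | h <;> rw [h] <;> simp

lemma extract (G : Matrix (Fin 2) (Fin 2) ℤ) (hd : G.det ≠ 0)
    (h2elem : ∀ i j, ∃ a : ℤ,
      ((2 : ℚ) • (G.map ((↑) : ℤ → ℚ))⁻¹ : Matrix (Fin 2) (Fin 2) ℚ) i j = a) :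
    G.det ∣ 2 * G 0 1 ∧ G.det ∣ 2 * G 0 0 ∧ G.det ∣ 2 * G 1 1 := by
  set A := G.map ((↑) : ℤ → ℚ) with hA
  have hAdet : A.det = (G.det : ℚ) := by
    rw [Matrix.det_fin_two, Matrix.det_fin_two]
    simp [hA, Matrix.map_apply]
  have hdQ : (G.det : ℚ) ≠ 0 := Int.cast_ne_zero.mpr hd
  have hinv : A⁻¹ = (G.det : ℚ)⁻¹ • !![A 1 1, -A 0 1; -A 1 0, A 0 0] := by
    rw [Matrix.inv_def, Matrix.adjugate_fin_two, Ring.inverse_eq_inv, hAdet,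
      Matrix.eta_fin_two A]
  refine ⟨?_, ?_, ?_⟩
  · obtain ⟨k, hk⟩ := h2elem 0 1
    rw [hinv] at hk
    simp [hA, Matrix.map_apply, Matrix.smul_apply] at hk
    refine ⟨-k, ?_⟩
    have : (2 * G 0 1 : ℚ) = (G.det * (-k) : ℚ) := by
      field_simp at hk ⊢; linarith [hk]
    exact_mod_cast this
  · obtain ⟨k, hk⟩ := h2elem 1 1
    rw [hinv] at hk
    simp [hA, Matrix.map_apply, Matrix.smul_apply] at hk
    refine ⟨k, ?_⟩
    have : (2 * G 0 0 : ℚ) = (G.det * k : ℚ) := by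
      field_simp at hk ⊢; linarith [hk]
    exact_mod_cast this
  · obtain ⟨k, hk⟩ := h2elem 0 0
    rw [hinv] at hk
    simp [hA, Matrix.map_apply, Matrix.smul_apply] at hk
    refine ⟨k, ?_⟩
    have : (2 * G 1 1 : ℚ) = (G.det * k : ℚ) := by
      field_simp at hk ⊢; linarith [hk]
    exact_mod_cast this

lemma arith (a c b d : ℤ) (hd : d = 4*a*c - b*b) (hdpos : 0 < d)
    (h1 : d ∣ 2*b) (h2 : d ∣ 4*a) (h3 : d ∣ 4*c) :
    ∃ e : ℤ, b = 2*e ∧ a*c - e*e = 1 := by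
  rcases Int.even_or_odd b with ⟨e, hbe⟩ | ⟨k, hbk⟩
  · refine ⟨e, by omega, ?_⟩
    set m := a*c - e*e with hm
    have hd4 : d = 4*m := by rw [hm, hd, hbe]; ring
    have hmpos : 0 < m := by omega
    have hma : m ∣ a := by
      have h : 4*m ∣ 4*a := hd4 ▸ h2
      exact (mul_dvd_mul_iff_left (by norm_num : (4:ℤ) ≠ 0)).mp h
    have hme : m ∣ e := by
      have h : 4*m ∣ 4*e := by rw [← hd4]; convert h1 using 1; omega
      exact (mul_dvd_mul_iff_left (by norm_num : (4:ℤ) ≠ 0)).mp h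
    have hmc : m ∣ c := by
      have h : 4*m ∣ 4*c := hd4 ▸ h3
      exact (mul_dvd_mul_iff_left (by norm_num : (4:ℤ) ≠ 0)).mp h
    obtain ⟨a1, ha1⟩ := hma
    obtain ⟨e1, he1⟩ := hme
    obtain ⟨c1, hc1⟩ := hmc
    have hmm : m * 1 = m * (m * (a1*c1 - e1*e1)) := by
      linear_combination hm + c*ha1 + (m*a1)*hc1 - (e + m*e1)*he1
    have h1m : 1 = m * (a1*c1 - e1*e1) := mul_left_cancel₀ hmpos.ne' hmm
    have hm1 : m = 1 := by
      rcases Int.isUnit_iff.mp (IsUnit.of_mul_eq_one (a := m) _ h1m.symm) with h | h <;> omega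
    omega
  · exfalso
    have hnd2 : ¬ (2:ℤ) ∣ d := by
      rintro ⟨j, hj⟩
      have h21 : (2:ℤ) ∣ 1 :=
        ⟨2*a*c - 2*k*k - 2*k - j, by linear_combination (-1:ℤ)*hj + hd - (b + 2*k + 1) * hbk⟩
      norm_num at h21
    have hcop2 : IsCoprime (2:ℤ) d := (Int.prime_two.coprime_iff_not_dvd).mpr hnd2
    have hcop4 : IsCoprime (4:ℤ) d := by
      have h := hcop2.mul_left hcop2
      rwa [show (2:ℤ)*2 = 4 by norm_num] at h
    have hda : d ∣ a := (hcop4.symm).dvd_of_dvd_mul_left h2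
    have hdc : d ∣ c := (hcop4.symm).dvd_of_dvd_mul_left h3
    have hdb : d ∣ b := (hcop2.symm).dvd_of_dvd_mul_left h1
    obtain ⟨a1, ha1⟩ := hda
    obtain ⟨c1, hc1⟩ := hdc
    obtain ⟨b1, hb1⟩ := hdb
    have hmm : d * 1 = d * (d * (4*a1*c1 - b1*b1)) := by
      linear_combination hd + 4*c*ha1 + 4*d*a1*hc1 - (b + d*b1)*hb1
    have h1d : 1 = d * (4*a1*c1 - b1*b1) := mul_left_cancel₀ hdpos.ne' hmm
    have hd1 : d = 1 := by
      rcases Int.isUnit_iff.mp (IsUnit.of_mul_eq_one (a := d) _ h1d.symm) with h | h <;> omega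
    have h42 : (4:ℤ) ∣ 2 :=
      ⟨a*c - k*k - k, by linear_combination hd - (b + 2*k + 1)*hbk - hd1⟩
    norm_num at h42

theorem stmt_14 (G : Matrix (Fin 2) (Fin 2) ℤ)
    (hsymm : G.transpose = G)
    (heven : Even (G 0 0) ∧ Even (G 1 1))
    (hposdef : 0 < G 0 0 ∧ 0 < G.det)
    (h2elem : ∀ i j, ∃ a : ℤ,
      ((2 : ℚ) • (G.map ((↑) : ℤ → ℚ))⁻¹ : Matrix (Fin 2) (Fin 2) ℚ) i j = a) :
    ∃ P : Matrix (Fin 2) (Fin 2) ℤ, (P.det = 1 ∨ P.det = -1) ∧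
      P.transpose * G * P = !![2, 0; 0, 2] := by
  have hb : G 1 0 = G 0 1 := by
    have h := congrFun (congrFun hsymm 0) 1
    simpa using h
  obtain ⟨a, ha⟩ := heven.1
  obtain ⟨c, hc⟩ := heven.2
  have hdet2 : G.det = 4*a*c - (G 0 1)*(G 0 1) := by
    rw [Matrix.det_fin_two, hb, ha, hc]; ring
  obtain ⟨hdv1, hdv2, hdv3⟩ := extract G hposdef.2.ne' h2elem
  have hdva : G.det ∣ 4*a := by
    have h4 : 4*a = 2 * G 0 0 := by omega
    rw [h4]; exact hdv2
  have hdvc : G.det ∣ 4*c := by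
    have h4 : 4*c = 2 * G 1 1 := by omega
    rw [h4]; exact hdv3
  obtain ⟨e, hbe, hsol⟩ := arith a c (G 0 1) G.det hdet2 hposdef.2 hdv1 hdva hdvc
  have ha0 : 0 < a := by omega
  have hc0 : 0 < c := by nlinarith [mul_self_nonneg e]
  obtain ⟨P, hPd, hP⟩ := key2 a e c ha0 hc0 hsol
  refine ⟨P, hPd, ?_⟩
  have hG2 : G = (2:ℤ) • !![a, e; e, c] := by
    ext i j
    fin_cases i <;> fin_cases j <;> simp [Matrix.smul_apply] <;> omega
  rw [hG2, Matrix.mul_smul, Matrix.smul_mul, hP]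
  ext i j
  fin_cases i <;> fin_cases j <;> simp [Matrix.smul_apply, Matrix.one_apply]
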